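/- For all real x with 0 < x < 1/2 and all real y with 0 < y ≤ 1, the double series Σ_{n≥0} Σ_{m≥0} a(n,m)·x^n·y^m converges absolutely and satisfies the kernel equation (1 − x(y + y^{−1})) · Σ_{n≥0} Σ_{m≥0} a(n,m)·x^n·y^m = 1 − (x/y) · Σ_{n≥0} a(n,0)·x^n. -/
import Mathlib


open Filter Real

/-- `aa n m` = number of length-`n` paths on `ℤ≥0` with steps `±1` starting at `0`
and ending at `m`. -/
def aa : ℕ → ℕ → ℕ
  | 0, m => if m = 0 then 1 else 0
  | n+1, m => aa n (m+1) + (if m = 0 then 0 else aa n (m-1))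

/-- `aSum n = Σ_{m=0}^n aa n m`. -/
def aSum (n : ℕ) : ℕ := ∑ m ∈ Finset.range (n+1), aa n m

/-- The modular variant `b(n,m)` depending on `ℓ`:
`b(n,m) = a(n,m)` if `m ≡ ℓ-1 (mod ℓ)`; otherwise `b(0,m) = δ_{m,0}`, and for `n ≥ 1`,
`b(n,m) = b(n-1,m-1) + b(n-1,m+1)` if `m % ℓ < ℓ-2` (negative-index terms are `0`),
and `b(n,m) = b(n-1,m-1)` if `m ≡ ℓ-2 (mod ℓ)`. -/
def bb (ℓ : ℕ) : ℕ → ℕ → ℕ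
  | 0, m => if m % ℓ = ℓ - 1 then aa 0 m else if m = 0 then 1 else 0
  | n+1, m =>
    if m % ℓ = ℓ - 1 then aa (n+1) m
    else if m % ℓ = ℓ - 2 then (if m = 0 then 0 else bb ℓ n (m-1))
    else (if m = 0 then 0 else bb ℓ n (m-1)) + bb ℓ n (m+1)

/-- `bSum ℓ n = Σ_{m=0}^n bb ℓ n m`. -/
def bSum (ℓ : ℕ) (n : ℕ) : ℕ := ∑ m ∈ Finset.range (n+1), bb ℓ n m

/-- `cc ℓ n r = Σ_{m ≥ 0, m ≡ r (mod ℓ)} aa n m` (finite since `aa n m = 0` for `m > n`). -/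
def cc (ℓ : ℕ) (n r : ℕ) : ℕ :=
  ∑ m ∈ Finset.range (n+1), if m % ℓ = r then aa n m else 0

/-- `ww ℓ n = Σ_{0 ≤ m ≤ n, m ≡ ℓ-1 (mod ℓ)} bb ℓ n m`. -/
def ww (ℓ : ℕ) (n : ℕ) : ℕ :=
  ∑ m ∈ Finset.range (n+1), if m % ℓ = ℓ - 1 then bb ℓ n m else 0

lemma aa_eq_zero : ∀ n m, n < m → aa n m = 0 := by
  intro n
  induction n with
  | zero => intro m h; simp [aa]; omega
  | succ n ih =>
    intro m h
    rw [aa]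
    rcases Nat.eq_zero_or_pos m with hm | hm
    · omega
    · rw [ih (m+1) (by omega), if_neg (by omega), ih (m-1) (by omega)]

lemma aa_le : ∀ n m, aa n m ≤ 2 ^ n := by
  intro n
  induction n with
  | zero => intro m; simp [aa]; split <;> simp
  | succ n ih =>
    intro m
    rw [aa, pow_succ, mul_two (2^n)]
    gcongr ?_ + ?_
    · exact ih _
    · split
      · positivity
      · exact ih _

lemma t_rec (y : ℝ) (n : ℕ) :
    y * (∑ m ∈ Finset.range (n+2), (aa (n+1) m : ℝ) * y ^ m)
      = (1 + y^2) * (∑ m ∈ Finset.range (n+1), (aa n m : ℝ) * y ^ m) - aa n 0 := by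
  have hA : ∑ m ∈ Finset.range (n+2), (aa n (m+1) : ℝ) * y ^ (m+1)
      = (∑ m ∈ Finset.range (n+1), (aa n m : ℝ) * y ^ m) - (aa n 0 : ℝ) := by
    have h3 : ∑ i ∈ Finset.range (n+3), (aa n i : ℝ) * y ^ i
        = ∑ m ∈ Finset.range (n+2), (aa n (m+1) : ℝ) * y ^ (m+1) + (aa n 0 : ℝ) * y ^ 0 :=
      Finset.sum_range_succ' _ (n+2)
    rw [Finset.sum_range_succ, Finset.sum_range_succ,
      aa_eq_zero n (n+2) (by omega), aa_eq_zero n (n+1) (by omega)] at h3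
    simp only [Nat.cast_zero, zero_mul, add_zero, pow_zero, mul_one] at h3
    linarith
  have hB : ∑ m ∈ Finset.range (n+2), (if m = 0 then (0:ℝ) else (aa n (m-1) : ℝ)) * y ^ (m+1)
      = y^2 * ∑ m ∈ Finset.range (n+1), (aa n m : ℝ) * y ^ m := by
    rw [Finset.sum_range_succ' _ (n+1)]
    simp only [Nat.succ_ne_zero, if_false, Nat.add_sub_cancel, ite_true, eq_self_iff_true,
      zero_mul, add_zero]
    rw [Finset.mul_sum]
    exact Finset.sum_congr rfl fun i _ => by ring
  have hsplit : ∀ m : ℕ, ((aa (n+1) m : ℝ)) * y^(m+1)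
      = (aa n (m+1) : ℝ) * y^(m+1) + (if m = 0 then (0:ℝ) else (aa n (m-1) : ℝ)) * y^(m+1) := by
    intro m
    simp only [aa]
    push_cast [apply_ite (Nat.cast : ℕ → ℝ)]
    ring
  calc y * (∑ m ∈ Finset.range (n+2), (aa (n+1) m : ℝ) * y ^ m)
      = ∑ m ∈ Finset.range (n+2), (aa (n+1) m : ℝ) * y ^ (m+1) := by
        rw [Finset.mul_sum]; exact Finset.sum_congr rfl fun m _ => by ring
    _ = ∑ m ∈ Finset.range (n+2), ((aa n (m+1) : ℝ) * y^(m+1)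
          + (if m = 0 then (0:ℝ) else (aa n (m-1) : ℝ)) * y^(m+1)) :=
        Finset.sum_congr rfl fun m _ => hsplit m
    _ = _ := by rw [Finset.sum_add_distrib, hA, hB]; ring


set_option maxHeartbeats 1000000 in
/-- Kernel equation: for `0 < x < 1/2` and `0 < y ≤ 1`, the double series converges
absolutely and `(1 − x(y+y⁻¹))·Σ_{n,m} a(n,m)xⁿyᵐ = 1 − (x/y)·Σ_n a(n,0)xⁿ`. -/
theorem stmt13 (x y : ℝ) (hx0 : 0 < x) (hx : x < 1/2) (hy0 : 0 < y) (hy : y ≤ 1) :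
    Summable (fun p : ℕ × ℕ => (aa p.1 p.2 : ℝ) * x ^ p.1 * y ^ p.2) ∧
    (1 - x * (y + y⁻¹)) * ∑' p : ℕ × ℕ, (aa p.1 p.2 : ℝ) * x ^ p.1 * y ^ p.2 =
      1 - (x / y) * ∑' n : ℕ, (aa n 0 : ℝ) * x ^ n := by
  set f : ℕ × ℕ → ℝ := fun p => (aa p.1 p.2 : ℝ) * x ^ p.1 * y ^ p.2 with hf
  set r : ℝ := Real.sqrt (2*x) with hrdef
  have hr0 : 0 ≤ r := Real.sqrt_nonneg _
  have hr1 : r < 1 := by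
    rw [hrdef, show (1:ℝ) = Real.sqrt 1 by simp]
    exact Real.sqrt_lt_sqrt (by linarith) (by linarith)
  have hr2 : r^2 = 2*x := Real.sq_sqrt (by linarith)
  have hfnn : 0 ≤ f := fun p => by positivity
  have hbound : ∀ p : ℕ × ℕ, f p ≤ r ^ p.1 * r ^ p.2 := by
    rintro ⟨n, m⟩
    rcases le_or_gt m n with hmn | hmn
    · have h1 : f (n, m) ≤ (2*x) ^ n := by
        calc (aa n m : ℝ) * x ^ n * y ^ m ≤ (2^n : ℝ) * x ^ n * 1 := by
              gcongr
              · exact_mod_cast aa_le n m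
              · exact pow_le_one₀ hy0.le hy
          _ = (2*x) ^ n := by rw [mul_pow]; ring
      calc f (n, m) ≤ (2*x) ^ n := h1
        _ = r ^ n * r ^ n := by rw [← hr2]; ring
        _ ≤ r ^ n * r ^ m :=
            mul_le_mul_of_nonneg_left (pow_le_pow_of_le_one hr0 hr1.le hmn) (pow_nonneg hr0 n)
    · have : f (n, m) = 0 := by
        show (aa n m : ℝ) * x ^ n * y ^ m = 0
        rw [aa_eq_zero n m hmn]; simp
      rw [this]; positivity
  have hgeo : Summable fun n : ℕ => r ^ n := summable_geometric_of_lt_one hr0 hr1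
  have hg : Summable fun p : ℕ × ℕ => r ^ p.1 * r ^ p.2 :=
    hgeo.mul_of_nonneg hgeo (fun n => pow_nonneg hr0 n) (fun n => pow_nonneg hr0 n)
  have hsum : Summable f := Summable.of_nonneg_of_le (fun p => hfnn p) hbound hg
  refine ⟨hsum, ?_⟩
  set t : ℕ → ℝ := fun n => ∑ m ∈ Finset.range (n+1), (aa n m : ℝ) * y ^ m with htdef
  have h_inner : ∀ n, (∑' m, f (n, m)) = x ^ n * t n := by
    intro n
    rw [tsum_eq_sum (s := Finset.range (n+1)) (fun m hm => by
      show (aa n m : ℝ) * x ^ n * y ^ m = 0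
      rw [aa_eq_zero n m (by simpa using hm)]; simp)]
    rw [htdef, Finset.mul_sum]
    exact Finset.sum_congr rfl fun m _ => by show (aa n m : ℝ) * x ^ n * y ^ m = _; ring
  have hpair := (summable_prod_of_nonneg hfnn).1 hsum
  have hxt : Summable fun n => x ^ n * t n := hpair.2.congr h_inner
  have hprod : (∑' p : ℕ × ℕ, f p) = ∑' n, x ^ n * t n := by
    rw [Summable.tsum_prod' hsum hpair.1]
    exact tsum_congr h_inner
  have hA : Summable fun n => (aa n 0 : ℝ) * x ^ n := by
    refine Summable.of_nonneg_of_le (fun n => by positivity) (fun n => ?_)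
      (summable_geometric_of_lt_one (by linarith) (by linarith) : Summable fun n : ℕ => (2*x)^n)
    calc (aa n 0 : ℝ) * x ^ n ≤ (2^n : ℝ) * x ^ n := by
          gcongr; exact_mod_cast aa_le n 0
      _ = (2*x)^n := by rw [mul_pow]
  have hshift : Summable fun n => x ^ (n+1) * t (n+1) := (summable_nat_add_iff (f := fun n => x ^ n * t n) 1).2 hxt
  set S : ℝ := ∑' n, x ^ n * t n with hSdef
  set A : ℝ := ∑' n, (aa n 0 : ℝ) * x ^ n with hAdef
  have ht0 : t 0 = 1 := by simp [htdef, aa]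
  have hS : S = 1 + ∑' n, x ^ (n+1) * t (n+1) := by
    rw [hSdef, Summable.tsum_eq_zero_add hxt, ht0]
    norm_num
  have hrest : y * (∑' n, x ^ (n+1) * t (n+1)) = x * (1 + y^2) * S - x * A := by
    calc y * (∑' n, x ^ (n+1) * t (n+1))
        = ∑' n, ((x * (1 + y^2)) * (x ^ n * t n) - x * ((aa n 0 : ℝ) * x ^ n)) := by
          rw [← tsum_mul_left]
          apply tsum_congr
          intro n
          have h := t_rec y n
          have h' : y * t (n+1) = (1 + y^2) * t n - (aa n 0 : ℝ) := h
          calc y * (x ^ (n+1) * t (n+1)) = x ^ (n+1) * (y * t (n+1)) := by ring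
            _ = x ^ (n+1) * ((1 + y^2) * t n - (aa n 0 : ℝ)) := by rw [h']
            _ = (x * (1 + y^2)) * (x ^ n * t n) - x * ((aa n 0 : ℝ) * x ^ n) := by ring
      _ = x * (1 + y^2) * S - x * A := by
          rw [Summable.tsum_sub (hxt.mul_left _) (hA.mul_left x), tsum_mul_left, tsum_mul_left]
  have key : y * S = y + x * (1 + y^2) * S - x * A := by
    have h := hS
    have h2 : y * S = y * 1 + y * (∑' n, x ^ (n+1) * t (n+1)) := by
      rw [← mul_add, ← hS]
    rw [hrest, mul_one] at h2
    linarith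
  have hy' : y ≠ 0 := ne_of_gt hy0
  have hinv : y * y⁻¹ = 1 := mul_inv_cancel₀ hy'
  rw [hprod]
  apply mul_left_cancel₀ hy'
  have h1 : y * (1 - x * (y + y⁻¹)) = y - x * (y^2 + 1) := by
    have hh : y * (x * (y + y⁻¹)) = x * (y^2 + y * y⁻¹) := by ring
    rw [mul_sub, mul_one, hh, hinv]
  have h2 : y * (x / y * A) = x * A := by
    rw [div_eq_mul_inv]
    calc y * (x * y⁻¹ * A) = (y * y⁻¹) * (x * A) := by ring
      _ = x * A := by rw [hinv, one_mul]
  rw [← mul_assoc, h1, mul_sub, mul_one, h2]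
  linear_combination key
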